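/- For D > 0, t > 0, r_r > 0, the passive-receiver fraction F(t|r₀) = (1/2)[erf((r_r−r₀)/(2√(Dt))) + erf((r_r+r₀)/(2√(Dt)))] + (√(Dt)/(√π r₀))·[exp(−(r_r+r₀)²/(4Dt)) − exp(−(r₀−r_r)²/(4Dt))] satisfies 0 ≤ F(t|r₀) ≤ 1 for all r₀ > 0, and lim_{t→∞} F(t|r₀) = 0. -/

import Mathlib

open Real Filter

/-- The error function `erf x = (2/√π) ∫₀^x e^{−u²} du`. -/
noncomputable def erf (x : ℝ) : ℝ :=
  (2 / Real.sqrt π) * ∫ u in (0:ℝ)..x, Real.exp (-u ^ 2)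

section erfAux

open MeasureTheory intervalIntegral

lemma gauss_intableI (a b : ℝ) :
    IntervalIntegrable (fun u : ℝ => Real.exp (-u ^ 2)) volume a b :=
  (Continuous.rexp (by continuity)).intervalIntegrable a b

lemma erf_neg (x : ℝ) : erf (-x) = - erf x := by
  unfold erf
  have h : (∫ u in (0:ℝ)..(-x), Real.exp (-u ^ 2))
      = - ∫ u in (0:ℝ)..x, Real.exp (-u ^ 2) := by
    have := intervalIntegral.integral_comp_neg (a := (0:ℝ)) (b := -x)
      (fun u : ℝ => Real.exp (-u ^ 2))
    simp only [neg_sq, neg_neg, neg_zero] at this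
    rw [this, intervalIntegral.integral_symm]
  rw [h]; ring

lemma abs_erf_le (x : ℝ) : |erf x| ≤ 2 * |x| / Real.sqrt π := by
  unfold erf
  rw [abs_mul]
  have h1 : |(2 : ℝ) / Real.sqrt π| = 2 / Real.sqrt π := by
    rw [abs_of_nonneg]; positivity
  have h2 : |∫ u in (0:ℝ)..x, Real.exp (-u ^ 2)| ≤ 1 * |x - 0| := by
    have := intervalIntegral.norm_integral_le_of_norm_le_const
      (C := 1) (a := (0:ℝ)) (b := x) (f := fun u : ℝ => Real.exp (-u ^ 2)) ?_
    · simpa using this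
    · intro u _
      rw [Real.norm_eq_abs, abs_of_pos (Real.exp_pos _)]
      exact Real.exp_le_one_iff.mpr (neg_nonpos.mpr (sq_nonneg u))
  calc |2 / Real.sqrt π| * |∫ u in (0:ℝ)..x, Real.exp (-u ^ 2)|
      ≤ (2 / Real.sqrt π) * |x| := by
        rw [h1]
        have hb : |∫ u in (0:ℝ)..x, Real.exp (-u ^ 2)| ≤ |x| := by
          simpa using h2
        exact mul_le_mul_of_nonneg_left hb (by positivity)
    _ = 2 * |x| / Real.sqrt π := by ring

lemma erf_le_one (x : ℝ) : erf x ≤ 1 := by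
  unfold erf
  have hπ : (0:ℝ) < Real.sqrt π := Real.sqrt_pos.mpr Real.pi_pos
  rcases le_total x 0 with h | h
  · have hint : (∫ u in (0:ℝ)..x, Real.exp (-u ^ 2)) ≤ 0 := by
      rw [intervalIntegral.integral_symm]
      simp only [neg_nonpos]
      exact intervalIntegral.integral_nonneg h (fun u _ => (Real.exp_pos _).le)
    nlinarith [div_pos (by norm_num : (0:ℝ) < 2) hπ]
  · have key : (∫ u in (0:ℝ)..x, Real.exp (-u ^ 2)) ≤ Real.sqrt π / 2 := by
      have hIoi : (∫ u in Set.Ioi (0:ℝ), Real.exp (-u ^ 2)) = Real.sqrt π / 2 := by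
        have := integral_gaussian_Ioi 1
        simpa using this
      rw [intervalIntegral.integral_of_le h, ← hIoi]
      apply setIntegral_mono_set
      · have : Integrable (fun u : ℝ => Real.exp (-1 * u ^ 2)) :=
          integrable_exp_neg_mul_sq one_pos
        simpa using this.integrableOn
      · exact Filter.Eventually.of_forall fun u => (Real.exp_pos _).le
      · exact Filter.Eventually.of_forall fun u hu => Set.Ioc_subset_Ioi_self hu
    rw [div_mul_eq_mul_div, div_le_one hπ]
    nlinarith

lemma integral_two_mul_gauss (a b : ℝ) :
    ∫ u in a..b, 2 * u * Real.exp (-u ^ 2) = Real.exp (-a ^ 2) - Real.exp (-b ^ 2) := by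
  have h : ∀ u : ℝ, HasDerivAt (fun v : ℝ => -Real.exp (-v ^ 2))
      (2 * u * Real.exp (-u ^ 2)) u := by
    intro u
    have h1 : HasDerivAt (fun v : ℝ => -v ^ 2) (-(2 * u)) u := by
      simpa [Pi.neg_def] using (hasDerivAt_pow 2 u).neg
    have h3 := h1.exp.fun_neg
    rw [show (2 * u * Real.exp (-u ^ 2)) = -(Real.exp (-u ^ 2) * -(2 * u)) by ring]; exact h3
  have := intervalIntegral.integral_eq_sub_of_hasDerivAt (fun u _ => h u)
    (Continuous.intervalIntegrable (by continuity) a b)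
  rw [this]; ring

lemma key_ineq (a b : ℝ) (hab : a ≤ b) (hsum : 0 ≤ a + b) :
    Real.exp (-a ^ 2) - Real.exp (-b ^ 2) ≤ (a + b) * ∫ u in a..b, Real.exp (-u ^ 2) := by
  rw [← integral_two_mul_gauss a b, ← intervalIntegral.integral_const_mul]
  have hint1 : IntervalIntegrable (fun u : ℝ => (a + b) * Real.exp (-u ^ 2)) volume a b :=
    Continuous.intervalIntegrable (by continuity) a b
  have hint2 : IntervalIntegrable (fun u : ℝ => 2 * u * Real.exp (-u ^ 2)) volume a b :=
    Continuous.intervalIntegrable (by continuity) a b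
  rw [← sub_nonneg, ← intervalIntegral.integral_sub hint1 hint2]
  set g : ℝ → ℝ := fun u => (a + b) * Real.exp (-u ^ 2) - 2 * u * Real.exp (-u ^ 2) with hg
  have hgc : Continuous g := by continuity
  have hrefl : (∫ u in a..b, g u) = ∫ u in a..b, g (a + b - u) := by
    have := intervalIntegral.integral_comp_sub_left (a := a) (b := b) g (a + b)
    rw [this]
    norm_num
  have hint3 : IntervalIntegrable (fun u : ℝ => g (a + b - u)) volume a b :=
    Continuous.intervalIntegrable (hgc.comp (by continuity)) a b
  have h2 : (2:ℝ) * ∫ u in a..b, g u = ∫ u in a..b, (g u + g (a + b - u)) := by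
    rw [intervalIntegral.integral_add (hgc.intervalIntegrable a b) hint3, ← hrefl]
    ring
  have hpt : ∀ u : ℝ, 0 ≤ g u + g (a + b - u) := by
    intro u
    have hrw : g u + g (a + b - u)
        = (a + b - 2 * u) * (Real.exp (-u ^ 2) - Real.exp (-(a + b - u) ^ 2)) := by
      simp only [hg]; ring
    rw [hrw]
    rcases le_total u ((a + b) / 2) with h | h
    · apply mul_nonneg (by linarith)
      rw [sub_nonneg, Real.exp_le_exp]
      nlinarith
    · apply mul_nonneg_iff.mpr
      refine Or.inr ⟨by linarith, ?_⟩
      rw [sub_nonpos, Real.exp_le_exp]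
      nlinarith
  have hnn : (0:ℝ) ≤ ∫ u in a..b, (g u + g (a + b - u)) :=
    intervalIntegral.integral_nonneg hab (fun u _ => hpt u)
  rw [← h2] at hnn
  show (0:ℝ) ≤ ∫ u in a..b, g u
  linarith

lemma exp_diff_le {x y : ℝ} (hx : 0 ≤ x) (hxy : x ≤ y) :
    Real.exp (-x) - Real.exp (-y) ≤ y - x := by
  have hh : Real.exp (-y) = Real.exp (-x) * Real.exp (x - y) := by
    rw [← Real.exp_add]; ring_nf
  nlinarith [Real.add_one_le_exp (x - y), Real.exp_le_one_iff.mpr (neg_nonpos.mpr hx),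
    (Real.exp_pos (-x)).le,
    mul_nonneg (sub_nonneg.mpr (Real.exp_le_one_iff.mpr (neg_nonpos.mpr hx)))
      (sub_nonneg.mpr hxy)]

end erfAux

/-- The passive-receiver observation fraction lies in `[0,1]` and vanishes as
`t → ∞`. -/
theorem passive_fraction_bounds
    (D rr : ℝ) (hD : 0 < D) (hrr : 0 < rr) :
    (∀ t : ℝ, 0 < t → ∀ r0 : ℝ, 0 < r0 →
      0 ≤ (1/2) * (erf ((rr - r0) / (2 * Real.sqrt (D * t))) +
            erf ((rr + r0) / (2 * Real.sqrt (D * t)))) +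
          (Real.sqrt (D * t) / (Real.sqrt π * r0)) *
            (Real.exp (-(rr + r0) ^ 2 / (4 * D * t)) -
              Real.exp (-(r0 - rr) ^ 2 / (4 * D * t))) ∧
      (1/2) * (erf ((rr - r0) / (2 * Real.sqrt (D * t))) +
            erf ((rr + r0) / (2 * Real.sqrt (D * t)))) +
          (Real.sqrt (D * t) / (Real.sqrt π * r0)) *
            (Real.exp (-(rr + r0) ^ 2 / (4 * D * t)) -
              Real.exp (-(r0 - rr) ^ 2 / (4 * D * t))) ≤ 1) ∧
    (∀ r0 : ℝ, 0 < r0 →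
      Tendsto (fun t : ℝ =>
          (1/2) * (erf ((rr - r0) / (2 * Real.sqrt (D * t))) +
              erf ((rr + r0) / (2 * Real.sqrt (D * t)))) +
            (Real.sqrt (D * t) / (Real.sqrt π * r0)) *
              (Real.exp (-(rr + r0) ^ 2 / (4 * D * t)) -
                Real.exp (-(r0 - rr) ^ 2 / (4 * D * t))))
        atTop (nhds 0)) := by
  have hπ : (0:ℝ) < Real.sqrt π := Real.sqrt_pos.mpr Real.pi_pos
  constructor
  · intro t ht r0 hr0
    have hDt : 0 < D * t := mul_pos hD ht
    set s := Real.sqrt (D * t) with hsdef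
    have hs : 0 < s := Real.sqrt_pos.mpr hDt
    have hs2 : s ^ 2 = D * t := Real.sq_sqrt hDt.le
    constructor
    · -- lower bound
      set a := (r0 - rr) / (2 * s) with hadef
      set b := (rr + r0) / (2 * s) with hbdef
      have hab : a ≤ b := by
        rw [hadef, hbdef, div_le_div_iff_of_pos_right (by positivity)]
        linarith
      have hsum : a + b = r0 / s := by
        rw [hadef, hbdef]
        field_simp
        ring
      have hh : (2 * s) ^ 2 = 4 * D * t := by rw [mul_pow, hs2]; ring
      have e1 : -(rr + r0) ^ 2 / (4 * D * t) = -b ^ 2 := by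
        rw [hbdef, div_pow, hh]; ring
      have e2 : -(r0 - rr) ^ 2 / (4 * D * t) = -a ^ 2 := by
        rw [hadef, div_pow, hh]; ring
      have e3 : (rr - r0) / (2 * s) = -a := by rw [hadef]; ring
      rw [e1, e2, e3, erf_neg]
      have herf : -erf a + erf b
          = (2 / Real.sqrt π) * ∫ u in a..b, Real.exp (-u ^ 2) := by
        unfold erf
        rw [show -((2 / Real.sqrt π) * ∫ u in (0:ℝ)..a, Real.exp (-u ^ 2))
              + (2 / Real.sqrt π) * ∫ u in (0:ℝ)..b, Real.exp (-u ^ 2)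
            = (2 / Real.sqrt π) * ((∫ u in (0:ℝ)..b, Real.exp (-u ^ 2))
              - ∫ u in (0:ℝ)..a, Real.exp (-u ^ 2)) from by ring,
          intervalIntegral.integral_interval_sub_left (gauss_intableI 0 b) (gauss_intableI 0 a)]
      have hk := key_ineq a b hab (by rw [hsum]; positivity)
      rw [hsum] at hk
      set I := ∫ u in a..b, Real.exp (-u ^ 2) with hI
      have hfromk : s * (Real.exp (-a ^ 2) - Real.exp (-b ^ 2)) ≤ r0 * I := by
        have h5 := mul_le_mul_of_nonneg_left hk hs.le
        calc s * (Real.exp (-a ^ 2) - Real.exp (-b ^ 2)) ≤ s * (r0 / s * I) := h5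
          _ = r0 * I := by field_simp
      have hexpr : 1/2 * (-erf a + erf b) + s / (Real.sqrt π * r0)
            * (Real.exp (-b ^ 2) - Real.exp (-a ^ 2))
          = (r0 * I + s * (Real.exp (-b ^ 2) - Real.exp (-a ^ 2))) / (Real.sqrt π * r0) := by
        rw [herf]
        field_simp
      rw [hexpr]
      apply div_nonneg _ (by positivity)
      linarith
    · -- upper bound
      have ht2 : s / (Real.sqrt π * r0) *
          (Real.exp (-(rr + r0) ^ 2 / (4 * D * t)) -
            Real.exp (-(r0 - rr) ^ 2 / (4 * D * t))) ≤ 0 := by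
        apply mul_nonpos_of_nonneg_of_nonpos (by positivity)
        rw [sub_nonpos, Real.exp_le_exp, div_le_div_iff_of_pos_right (by positivity)]
        nlinarith
      have g1 := erf_le_one ((rr - r0) / (2 * s))
      have g2 := erf_le_one ((rr + r0) / (2 * s))
      linarith
  · -- limit
    intro r0 hr0
    set C := (|rr - r0| + (rr + r0) + 2 * rr) / (2 * Real.sqrt π) with hC
    refine squeeze_zero_norm' (a := fun t : ℝ => C / Real.sqrt (D * t)) ?_ ?_
    · filter_upwards [eventually_gt_atTop (0:ℝ)] with t ht
      have hDt : 0 < D * t := mul_pos hD ht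
      set s := Real.sqrt (D * t) with hsdef
      have hs : 0 < s := Real.sqrt_pos.mpr hDt
      have hs2 : s ^ 2 = D * t := Real.sq_sqrt hDt.le
      rw [Real.norm_eq_abs]
      have h1 : |erf ((rr - r0) / (2 * s))| ≤ 2 * (|rr - r0| / (2 * s)) / Real.sqrt π := by
        have := abs_erf_le ((rr - r0) / (2 * s))
        rwa [abs_div, abs_of_pos (by positivity : (0:ℝ) < 2 * s)] at this
      have h2 : |erf ((rr + r0) / (2 * s))| ≤ 2 * ((rr + r0) / (2 * s)) / Real.sqrt π := by
        have := abs_erf_le ((rr + r0) / (2 * s))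
        rwa [abs_div, abs_of_pos (by positivity : (0:ℝ) < 2 * s),
          abs_of_pos (by positivity : (0:ℝ) < rr + r0)] at this
      have h3 : |Real.exp (-(rr + r0) ^ 2 / (4 * D * t)) -
            Real.exp (-(r0 - rr) ^ 2 / (4 * D * t))| ≤ rr * r0 / (D * t) := by
        have ea : -(r0 - rr) ^ 2 / (4 * D * t) = -((r0 - rr) ^ 2 / (4 * D * t)) := by ring
        have eb : -(rr + r0) ^ 2 / (4 * D * t) = -((rr + r0) ^ 2 / (4 * D * t)) := by ring
        rw [ea, eb, abs_sub_comm]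
        have hle : (r0 - rr) ^ 2 / (4 * D * t) ≤ (rr + r0) ^ 2 / (4 * D * t) := by
          rw [div_le_div_iff_of_pos_right (by positivity)]
          nlinarith
        rw [abs_of_nonneg (sub_nonneg.mpr (Real.exp_le_exp.mpr (by linarith)))]
        calc Real.exp (-((r0 - rr) ^ 2 / (4 * D * t)))
              - Real.exp (-((rr + r0) ^ 2 / (4 * D * t)))
            ≤ (rr + r0) ^ 2 / (4 * D * t) - (r0 - rr) ^ 2 / (4 * D * t) :=
              exp_diff_le (by positivity) hle
          _ = rr * r0 / (D * t) := by field_simp; ring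
      have k1 : |1/2 * (erf ((rr - r0) / (2 * s)) + erf ((rr + r0) / (2 * s)))|
          ≤ 1/2 * (|erf ((rr - r0) / (2 * s))| + |erf ((rr + r0) / (2 * s))|) := by
        rw [abs_mul, abs_of_nonneg (by norm_num : (0:ℝ) ≤ 1/2)]
        exact mul_le_mul_of_nonneg_left (abs_add_le _ _) (by norm_num)
      have k2 : |s / (Real.sqrt π * r0) *
            (Real.exp (-(rr + r0) ^ 2 / (4 * D * t)) -
              Real.exp (-(r0 - rr) ^ 2 / (4 * D * t)))|
          = s / (Real.sqrt π * r0) * |Real.exp (-(rr + r0) ^ 2 / (4 * D * t)) -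
              Real.exp (-(r0 - rr) ^ 2 / (4 * D * t))| := by
        rw [abs_mul, abs_of_nonneg (by positivity)]
      calc |1/2 * (erf ((rr - r0) / (2 * s)) + erf ((rr + r0) / (2 * s))) +
            s / (Real.sqrt π * r0) *
              (Real.exp (-(rr + r0) ^ 2 / (4 * D * t)) -
                Real.exp (-(r0 - rr) ^ 2 / (4 * D * t)))|
          ≤ 1/2 * (|erf ((rr - r0) / (2 * s))| + |erf ((rr + r0) / (2 * s))|) +
            s / (Real.sqrt π * r0) * |Real.exp (-(rr + r0) ^ 2 / (4 * D * t)) -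
              Real.exp (-(r0 - rr) ^ 2 / (4 * D * t))| := by
            refine (abs_add_le _ _).trans ?_
            rw [k2]
            exact add_le_add_left k1 _
        _ ≤ 1/2 * (2 * (|rr - r0| / (2 * s)) / Real.sqrt π +
              2 * ((rr + r0) / (2 * s)) / Real.sqrt π) +
            s / (Real.sqrt π * r0) * (rr * r0 / (D * t)) := by
            gcongr
        _ = C / s := by
            rw [hC, ← hs2]
            field_simp
    · have hst : Tendsto (fun t : ℝ => Real.sqrt (D * t)) atTop atTop := by
        apply Filter.tendsto_atTop_atTop.mpr
        intro b
        refine ⟨(max b 0) ^ 2 / D, fun t ht => ?_⟩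
        have hb2 : (max b 0) ^ 2 ≤ D * t := by
          rw [div_le_iff₀ hD] at ht
          nlinarith
        calc b ≤ max b 0 := le_max_left _ _
          _ = Real.sqrt ((max b 0) ^ 2) := (Real.sqrt_sq (le_max_right _ _)).symm
          _ ≤ Real.sqrt (D * t) := Real.sqrt_le_sqrt hb2
      have := (hst.inv_tendsto_atTop).const_mul C
      simpa [div_eq_mul_inv, Function.comp] using this
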